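/- (Lemma 3.) Assume Conditions 1, 2 and 3, with d₀ as given by Lemma 1. Then there exists B < ∞ such that for all n, sup_{θ∈Θ} max_{1≤j≤n} Σ_{i=1}^n |K_θ(f_j^n − f_i^n)| ≤ B. -/

import Mathlib

open scoped RealInnerProductSpace

lemma pow_sub_pow_le_aux (d : ℕ) : ∀ a b : ℝ, 0 ≤ b → b ≤ a →
    a ^ (d + 1) - b ^ (d + 1) ≤ (d + 1) * (a - b) * a ^ d := by
  induction d with
  | zero => intro a b hb hba; simp
  | succ d ih =>
    intro a b hb hba
    have h1 := ih a b hb hba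
    have h2 : b ^ (d + 1) ≤ a ^ (d + 1) := pow_le_pow_left₀ hb hba _
    have ha : (0:ℝ) ≤ a := hb.trans hba
    have h3 : (0:ℝ) ≤ a - b := by linarith
    have h4 : a * (a ^ (d + 1) - b ^ (d + 1)) ≤ a * ((d + 1) * (a - b) * a ^ d) :=
      mul_le_mul_of_nonneg_left h1 ha
    have h5 : (a - b) * b ^ (d + 1) ≤ (a - b) * a ^ (d + 1) :=
      mul_le_mul_of_nonneg_left h2 h3
    push_cast
    calc a ^ (d + 1 + 1) - b ^ (d + 1 + 1)
        = a * (a ^ (d + 1) - b ^ (d + 1)) + (a - b) * b ^ (d + 1) := by ring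
      _ ≤ a * ((d + 1) * (a - b) * a ^ d) + (a - b) * a ^ (d + 1) := add_le_add h4 h5
      _ = ((d:ℝ) + 1 + 1) * (a - b) * a ^ (d + 1) := by ring

lemma card_le_shell {n d : ℕ} (ψ : Fin n → (Fin (d + 1) → ℤ))
    (hinj : Function.Injective ψ) (m : ℕ) :
    ((Finset.univ.filter fun i : Fin n =>
        (Finset.univ.sup fun k => (ψ i k).natAbs) = m).card : ℝ)
      ≤ 2 * ((d : ℝ) + 1) * (2 * m + 1) ^ d := by
  classical
  set Ball : ℕ → Finset (Fin (d + 1) → ℤ) :=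
    fun r => Fintype.piFinset fun _ => Finset.Icc (-(r : ℤ)) r with hBall
  have hcard : ∀ r, (Ball r).card = (2 * r + 1) ^ (d + 1) := by
    intro r
    rw [hBall]
    rw [Fintype.card_piFinset]
    have : (Finset.Icc (-(r : ℤ)) r).card = 2 * r + 1 := by
      rw [Int.card_Icc]
      omega
    simp [this]
  have hmem : ∀ (i : Fin n) (r : ℕ),
      ψ i ∈ Ball r ↔ ∀ k, (ψ i k).natAbs ≤ r := by
    intro i r
    rw [hBall, Fintype.mem_piFinset]
    refine forall_congr' fun k => ?_
    rw [Finset.mem_Icc]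
    omega
  have hsubcard : ∀ r, (Finset.univ.filter fun i : Fin n =>
      (Finset.univ.sup fun k => (ψ i k).natAbs) = r).card ≤ (Ball r).card := by
    intro r
    apply Finset.card_le_card_of_injOn ψ
    · intro i hi
      rw [Finset.mem_coe, hmem]
      intro k
      have h1 : (ψ i k).natAbs ≤ Finset.univ.sup fun k => (ψ i k).natAbs :=
        Finset.le_sup (f := fun k => (ψ i k).natAbs) (Finset.mem_univ k)
      have h2 := (Finset.mem_filter.mp hi).2
      omega
    · exact fun a _ b _ h => hinj h
  rcases Nat.eq_zero_or_pos m with rfl | hm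
  · -- m = 0 : card ≤ 1
    have := hsubcard 0
    rw [hcard 0] at this
    have h1 : ((Finset.univ.filter fun i : Fin n =>
        (Finset.univ.sup fun k => (ψ i k).natAbs) = 0).card : ℝ) ≤ 1 := by
      exact_mod_cast this.trans (by norm_num)
    refine h1.trans ?_
    have : (1:ℝ) ≤ (2 * (0:ℕ) + 1 : ℝ) ^ d := by norm_num
    nlinarith [this]
  · -- m ≥ 1 : inject into shell Ball m \ Ball (m-1)
    have hsub2 : (Finset.univ.filter fun i : Fin n =>
        (Finset.univ.sup fun k => (ψ i k).natAbs) = m).card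
        ≤ (Ball m \ Ball (m - 1)).card := by
      apply Finset.card_le_card_of_injOn ψ
      · intro i hi
        have h2 := (Finset.mem_filter.mp hi).2
        rw [Finset.mem_coe, Finset.mem_sdiff, hmem, hmem]
        constructor
        · intro k
          have h1 : (ψ i k).natAbs ≤ Finset.univ.sup fun k => (ψ i k).natAbs :=
            Finset.le_sup (f := fun k => (ψ i k).natAbs) (Finset.mem_univ k)
          omega
        · intro hall
          obtain ⟨k, -, hk⟩ := Finset.exists_mem_eq_sup Finset.univ
            ⟨⟨0, Nat.succ_pos d⟩, Finset.mem_univ _⟩ (fun k => (ψ i k).natAbs)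
          have := hall k
          omega
      · exact fun a _ b _ h => hinj h
    have hss : Ball (m - 1) ⊆ Ball m := by
      intro q hq
      rw [hBall, Fintype.mem_piFinset] at hq ⊢
      intro k
      have := hq k
      rw [Finset.mem_Icc] at this ⊢
      omega
    rw [Finset.card_sdiff_of_subset hss, hcard, hcard] at hsub2
    have hmono : (2 * (m - 1) + 1) ^ (d + 1) ≤ (2 * m + 1) ^ (d + 1) :=
      Nat.pow_le_pow_left (by omega) _
    have hcast : (((2 * m + 1) ^ (d + 1) - (2 * (m - 1) + 1) ^ (d + 1) : ℕ) : ℝ)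
        = ((2 * m + 1 : ℕ) : ℝ) ^ (d + 1) - ((2 * (m - 1) + 1 : ℕ) : ℝ) ^ (d + 1) := by
      rw [Nat.cast_sub hmono]
      push_cast
      ring
    have hreal : ((Finset.univ.filter fun i : Fin n =>
        (Finset.univ.sup fun k => (ψ i k).natAbs) = m).card : ℝ)
        ≤ ((2 * m + 1 : ℕ) : ℝ) ^ (d + 1) - ((2 * (m - 1) + 1 : ℕ) : ℝ) ^ (d + 1) := by
      rw [← hcast]
      exact_mod_cast hsub2
    refine hreal.trans ?_
    have hb : ((2 * (m - 1) + 1 : ℕ) : ℝ) = 2 * (m : ℝ) - 1 := by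
      have h1 : (1:ℕ) ≤ m := hm
      push_cast [Nat.cast_sub h1]
      ring
    have ha : ((2 * m + 1 : ℕ) : ℝ) = 2 * (m : ℝ) + 1 := by push_cast; ring
    rw [ha, hb]
    have hm1 : (1:ℝ) ≤ (m:ℝ) := by exact_mod_cast hm
    have := pow_sub_pow_le_aux d (2 * (m : ℝ) + 1) (2 * (m : ℝ) - 1)
      (by linarith) (by linarith)
    calc (2 * (m:ℝ) + 1) ^ (d + 1) - (2 * (m:ℝ) - 1) ^ (d + 1)
        ≤ ((d:ℝ) + 1) * ((2 * (m:ℝ) + 1) - (2 * (m:ℝ) - 1)) * (2 * (m:ℝ) + 1) ^ d := by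
          exact_mod_cast this
      _ = 2 * ((d:ℝ) + 1) * (2 * (m:ℝ) + 1) ^ d := by ring

lemma summable_u {d : ℕ} {γ c' C : ℝ} (hc' : 0 < c') (hC : 0 ≤ C) (hγ : (d:ℝ) + 1 < γ) :
    Summable (fun m : ℕ => (2 * (d + 1) : ℝ) * (2 * m + 1) ^ d * (C / (1 + (c' * m) ^ γ))) := by
  have hγ0 : 0 < γ := lt_trans (by positivity) hγ
  rw [← summable_nat_add_iff 1]
  set K : ℝ := (2 * ((d:ℝ) + 1)) * 3 ^ d * C / c' ^ γ with hK
  have hbase : Summable (fun m : ℕ => K * ((m : ℝ) + 1) ^ ((d : ℝ) - γ)) := by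
    have h1 : Summable (fun m : ℕ => ((m : ℝ)) ^ ((d : ℝ) - γ)) :=
      Real.summable_nat_rpow.mpr (by linarith)
    have h2 : Summable (fun m : ℕ => ((m + 1 : ℕ) : ℝ) ^ ((d : ℝ) - γ)) :=
      (summable_nat_add_iff 1).mpr h1
    exact (h2.congr (by intro m; push_cast; ring_nf)).mul_left K
  refine Summable.of_nonneg_of_le (fun m => by positivity) (fun m => ?_) hbase
  have hm1 : (0:ℝ) < (m:ℝ) + 1 := by positivity
  have hmem : ((m:ℝ) + 1) = ((m + 1 : ℕ) : ℝ) := by push_cast; ring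
  have step1 : (2 * ((d:ℝ) + 1)) * (2 * ((m + 1 : ℕ):ℝ) + 1) ^ d *
      (C / (1 + (c' * ((m + 1 : ℕ):ℝ)) ^ γ)) ≤
      (2 * ((d:ℝ) + 1)) * (3 * ((m:ℝ) + 1)) ^ d * (C / (c' ^ γ * ((m:ℝ) + 1) ^ γ)) := by
    have hpos : (0:ℝ) < c' ^ γ * ((m:ℝ) + 1) ^ γ := by positivity
    gcongr
    · push_cast; linarith
    · rw [← Real.mul_rpow hc'.le hm1.le, ← hmem]
      nlinarith [Real.rpow_nonneg (mul_nonneg hc'.le hm1.le) γ]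
  refine le_trans (by exact_mod_cast step1) (le_of_eq ?_)
  rw [Real.rpow_sub hm1, Real.rpow_natCast, mul_pow, hK]
  have h3 : ((m:ℝ)+1) ^ γ ≠ 0 := by positivity
  have h4 : (c':ℝ) ^ γ ≠ 0 := by positivity
  field_simp
  push_cast
  ring

/-- Lemma 3: under Conditions 1, 2 and 3, the row sums of absolute values of the covariance
matrices are uniformly bounded over `n`, `θ ∈ Θ` and the row index. -/
theorem row_sums_uniformly_bounded
    {H : Type*} [NormedAddCommGroup H] [InnerProductSpace ℝ H] [CompleteSpace H]
    (e : HilbertBasis ℕ ℝ H)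
    (f : (n : ℕ) → Fin n → H)
    {p : ℕ} (Θ : Set (EuclideanSpace ℝ (Fin p))) (hΘ : IsCompact Θ)
    (K : EuclideanSpace ℝ (Fin p) → H → ℝ)
    (hstat : ∀ θ ∈ Θ, ∀ g : H, K θ (-g) = K θ g)
    -- Condition 1
    (Δ : ℝ) (hΔ : 0 < Δ)
    (hC1 : ∀ n, ∀ i j : Fin n, i ≠ j → 2 * Δ ≤ ‖f n i - f n j‖)
    -- Condition 2
    (J₀ : ℕ) (s : ℕ → ℝ) (hs0 : ∀ j, J₀ ≤ j → 0 ≤ s j)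
    (hssum : Summable fun j : ℕ => s (J₀ + j) ^ 2)
    (hC2 : ∀ n, ∀ i : Fin n, ∀ j, J₀ ≤ j → |(⟪f n i, e j⟫)| ≤ s j)
    -- the integer d₀ given by Lemma 1
    (d₀ : ℕ) (hd₀J : J₀ ≤ d₀)
    (hd₀tail : ∑' k : ℕ, s (d₀ + 1 + k) ^ 2 < Δ ^ 2 / 16)
    (hd₀sep : ∀ n, ∀ i j : Fin n, i ≠ j →
      Δ ≤ ‖(∑ k ∈ Finset.range d₀, ⟪f n i, e k⟫ • e k)
            - ∑ k ∈ Finset.range d₀, ⟪f n j, e k⟫ • e k‖)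
    -- Condition 3
    (γ₀ : ℝ) (hγ₀ : (d₀ : ℝ) < γ₀) (C₀ : ℝ)
    (hC3 : ∀ θ ∈ Θ, ∀ g : H, |K θ g| ≤ C₀ / (1 + ‖g‖ ^ γ₀)) :
    ∃ B : ℝ, ∀ n, ∀ θ ∈ Θ, ∀ j : Fin n,
      ∑ i : Fin n, |K θ (f n j - f n i)| ≤ B := by
  classical
  have hCnn : (0:ℝ) ≤ max C₀ 0 := le_max_right _ _
  have hγ0 : 0 < γ₀ := lt_of_le_of_lt (Nat.cast_nonneg d₀) hγ₀
  rcases Nat.eq_zero_or_pos d₀ with hd0 | hdpos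
  · -- degenerate case d₀ = 0 : all inputs coincide, so n ≤ 1
    subst hd0
    refine ⟨max C₀ 0, fun n θ hθ j => ?_⟩
    have hall : ∀ i : Fin n, i = j := by
      intro i
      by_contra hne
      have h := hd₀sep n i j hne
      simp only [Finset.range_zero, Finset.sum_empty, sub_zero, norm_zero] at h
      linarith
    have hsum1 : ∑ i : Fin n, |K θ (f n j - f n i)| = |K θ (f n j - f n j)| := by
      rw [Finset.sum_eq_single j]
      · exact fun i _ hne => absurd (hall i) hne
      · exact fun h => absurd (Finset.mem_univ j) h
    rw [hsum1, sub_self]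
    have h := hC3 θ hθ 0
    rw [norm_zero, Real.zero_rpow (ne_of_gt hγ0), add_zero, div_one] at h
    exact h.trans (le_max_left _ _)
  · obtain ⟨d, rfl⟩ : ∃ d, d₀ = d + 1 := ⟨d₀ - 1, (Nat.succ_pred_eq_of_pos hdpos).symm⟩
    set c : ℝ := Δ / (2 * Real.sqrt ((d:ℝ) + 1)) with hcdef
    have hsq : (0:ℝ) < Real.sqrt ((d:ℝ) + 1) := Real.sqrt_pos.mpr (by positivity)
    have hcpos : 0 < c := by rw [hcdef]; positivity
    have hc2 : ((d:ℝ) + 1) * c ^ 2 = Δ ^ 2 / 4 := by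
      rw [hcdef, div_pow, mul_pow, Real.sq_sqrt (by positivity : (0:ℝ) ≤ (d:ℝ) + 1)]
      field_simp
      ring
    have hγd : (d:ℝ) + 1 < γ₀ := by exact_mod_cast hγ₀
    have hsum : Summable (fun m : ℕ => (2 * (d + 1) : ℝ) * (2 * m + 1) ^ d *
        ((max C₀ 0) / (1 + (c / 2 * m) ^ γ₀))) :=
      summable_u (by positivity) hCnn hγd
    refine ⟨∑' m : ℕ, (2 * (d + 1) : ℝ) * (2 * m + 1) ^ d *
        ((max C₀ 0) / (1 + (c / 2 * m) ^ γ₀)), fun n θ hθ j => ?_⟩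
    set ψ : Fin n → (Fin (d + 1) → ℤ) :=
      fun i k => round ((⟪f n i - f n j, e (k : ℕ)⟫ : ℝ) / c) with hψ
    -- each coordinate of `f n i - f n j` is within `c/2` of `c * ψ i k`
    have happrox : ∀ (i : Fin n) (k : Fin (d + 1)),
        |(⟪f n i - f n j, e (k : ℕ)⟫ : ℝ) - c * ψ i k| ≤ c / 2 := by
      intro i k
      have h := abs_sub_round ((⟪f n i - f n j, e (k : ℕ)⟫ : ℝ) / c)
      have heq : (⟪f n i - f n j, e (k : ℕ)⟫ : ℝ) - c * ψ i k
          = c * ((⟪f n i - f n j, e (k : ℕ)⟫ : ℝ) / c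
              - round ((⟪f n i - f n j, e (k : ℕ)⟫ : ℝ) / c)) := by
        rw [hψ]
        field_simp
      rw [heq, abs_mul, abs_of_pos hcpos]
      calc c * |(⟪f n i - f n j, e (k : ℕ)⟫ : ℝ) / c
              - (round ((⟪f n i - f n j, e (k : ℕ)⟫ : ℝ) / c) : ℝ)|
          ≤ c * (1 / 2) := mul_le_mul_of_nonneg_left h hcpos.le
        _ = c / 2 := by ring
    -- separation of the projected coordinates
    have hsep : ∀ i i' : Fin n, i ≠ i' →
        Δ ^ 2 ≤ ∑ k ∈ Finset.range (d + 1), (⟪f n i - f n i', e k⟫ : ℝ) ^ 2 := by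
      intro i i' hne
      have h1 := hd₀sep n i i' hne
      have h2 : (∑ k ∈ Finset.range (d + 1), (⟪f n i, e k⟫ : ℝ) • e k)
          - ∑ k ∈ Finset.range (d + 1), (⟪f n i', e k⟫ : ℝ) • e k
          = ∑ k ∈ Finset.range (d + 1), (⟪f n i - f n i', e k⟫ : ℝ) • e k := by
        rw [← Finset.sum_sub_distrib]
        refine Finset.sum_congr rfl fun k _ => ?_
        rw [inner_sub_left, sub_smul]
      have h3 := e.orthonormal.inner_sum (fun k => (⟪f n i - f n i', e k⟫ : ℝ))
        (fun k => (⟪f n i - f n i', e k⟫ : ℝ)) (Finset.range (d + 1))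
      rw [real_inner_self_eq_norm_sq] at h3
      have h4 : Δ ^ 2 ≤ ‖∑ k ∈ Finset.range (d + 1), (⟪f n i - f n i', e k⟫ : ℝ) • e k‖ ^ 2 := by
        rw [← h2]
        exact pow_le_pow_left₀ hΔ.le h1 2
      rw [h3] at h4
      simpa [sq] using h4
    -- injectivity of the rounding map
    have hinj : Function.Injective ψ := by
      intro i i' hii
      by_contra hne
      have hkb : ∀ k ∈ Finset.range (d + 1), (⟪f n i - f n i', e k⟫ : ℝ) ^ 2 ≤ c ^ 2 := by
        intro k hk
        have hklt := Finset.mem_range.mp hk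
        set k' : Fin (d + 1) := ⟨k, hklt⟩ with hk'
        have e1 := happrox i k'
        have e2 := happrox i' k'
        have e3 : ψ i k' = ψ i' k' := by rw [hii]
        have e4 : (⟪f n i - f n i', e k⟫ : ℝ)
            = ((⟪f n i - f n j, e k⟫ : ℝ) - c * ψ i k')
              - ((⟪f n i' - f n j, e k⟫ : ℝ) - c * ψ i' k') := by
          rw [e3]
          simp only [inner_sub_left]
          ring
        have e5 : |(⟪f n i - f n i', e k⟫ : ℝ)| ≤ c := by
          rw [e4]
          have := abs_sub ((⟪f n i - f n j, e k⟫ : ℝ) - c * ψ i k')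
            ((⟪f n i' - f n j, e k⟫ : ℝ) - c * ψ i' k')
          have e1' : |(⟪f n i - f n j, e (k' : ℕ)⟫ : ℝ) - c * ψ i k'| ≤ c / 2 := e1
          have e2' : |(⟪f n i' - f n j, e (k' : ℕ)⟫ : ℝ) - c * ψ i' k'| ≤ c / 2 := e2
          simp only [hk'] at e1' e2'
          calc |((⟪f n i - f n j, e k⟫ : ℝ) - c * ψ i k')
                - ((⟪f n i' - f n j, e k⟫ : ℝ) - c * ψ i' k')|
              ≤ |(⟪f n i - f n j, e k⟫ : ℝ) - c * ψ i k'|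
                + |(⟪f n i' - f n j, e k⟫ : ℝ) - c * ψ i' k'| := abs_sub _ _
            _ ≤ c / 2 + c / 2 := add_le_add e1' e2'
            _ = c := by ring
        calc (⟪f n i - f n i', e k⟫ : ℝ) ^ 2 = |(⟪f n i - f n i', e k⟫ : ℝ)| ^ 2 :=
              (sq_abs _).symm
          _ ≤ c ^ 2 := pow_le_pow_left₀ (abs_nonneg _) e5 2
      have h5 := hsep i i' hne
      have h6 : ∑ k ∈ Finset.range (d + 1), (⟪f n i - f n i', e k⟫ : ℝ) ^ 2
          ≤ ((d : ℝ) + 1) * c ^ 2 := by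
        calc ∑ k ∈ Finset.range (d + 1), (⟪f n i - f n i', e k⟫ : ℝ) ^ 2
            ≤ ∑ _k ∈ Finset.range (d + 1), c ^ 2 := Finset.sum_le_sum hkb
          _ = ((d : ℝ) + 1) * c ^ 2 := by
              rw [Finset.sum_const, Finset.card_range, nsmul_eq_mul]
              push_cast
              ring
      rw [hc2] at h6
      nlinarith
    -- the sup of coordinates
    set M : Fin n → ℕ := fun i => Finset.univ.sup fun k => (ψ i k).natAbs with hMdef
    -- pointwise bound
    have hpoint : ∀ i : Fin n,
        |K θ (f n j - f n i)| ≤ (max C₀ 0) / (1 + (c / 2 * (M i : ℝ)) ^ γ₀) := by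
      intro i
      have hle : c / 2 * (M i : ℝ) ≤ ‖f n j - f n i‖ := by
        obtain ⟨k, -, hk⟩ := Finset.exists_mem_eq_sup Finset.univ
          ⟨⟨0, Nat.succ_pos d⟩, Finset.mem_univ _⟩ (fun k => (ψ i k).natAbs)
        have h6 : (M i : ℝ) = |((ψ i k : ℤ) : ℝ)| := by
          rw [hMdef]
          simp only [hk]
          push_cast [Nat.cast_natAbs]
          rfl
        rcases eq_or_ne (ψ i k) 0 with h0 | h0
        · rw [h6, h0]
          simpa using norm_nonneg (f n j - f n i)
        · have h1 : (1:ℝ) ≤ |((ψ i k : ℤ) : ℝ)| := by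
            have := Int.one_le_abs h0
            calc (1:ℝ) = ((1:ℤ):ℝ) := by norm_num
              _ ≤ ((|ψ i k| : ℤ) : ℝ) := by exact_mod_cast this
              _ = |((ψ i k : ℤ) : ℝ)| := by push_cast; ring
          have h2 := happrox i k
          have h3 : c / 2 * |((ψ i k : ℤ) : ℝ)| ≤ |(⟪f n i - f n j, e (k : ℕ)⟫ : ℝ)| := by
            have h4 : |c * ((ψ i k : ℤ) : ℝ)|
                - |(⟪f n i - f n j, e (k : ℕ)⟫ : ℝ) - c * ψ i k|
                ≤ |(⟪f n i - f n j, e (k : ℕ)⟫ : ℝ)| := by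
              have h7 := abs_sub_abs_le_abs_sub (c * ((ψ i k : ℤ) : ℝ))
                ((⟪f n i - f n j, e (k : ℕ)⟫ : ℝ))
              rw [abs_sub_comm] at h7
              linarith
            rw [abs_mul, abs_of_pos hcpos] at h4
            nlinarith [mul_nonneg hcpos.le (by linarith : (0:ℝ) ≤ |((ψ i k : ℤ) : ℝ)| - 1)]
          have h5 : |(⟪f n i - f n j, e (k : ℕ)⟫ : ℝ)| ≤ ‖f n i - f n j‖ := by
            have h := abs_real_inner_le_norm (f n i - f n j) (e (k : ℕ))
            rwa [e.orthonormal.1 (k : ℕ), mul_one] at h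
          rw [norm_sub_rev]
          calc c / 2 * (M i : ℝ) = c / 2 * |((ψ i k : ℤ) : ℝ)| := by rw [h6]
            _ ≤ |(⟪f n i - f n j, e (k : ℕ)⟫ : ℝ)| := h3
            _ ≤ ‖f n i - f n j‖ := h5
      refine (hC3 θ hθ (f n j - f n i)).trans ?_
      have hd1 : (0:ℝ) < 1 + (c / 2 * (M i : ℝ)) ^ γ₀ := by positivity
      apply div_le_div₀ hCnn (le_max_left _ _) hd1
      have h8 : (c / 2 * (M i : ℝ)) ^ γ₀ ≤ ‖f n j - f n i‖ ^ γ₀ :=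
        Real.rpow_le_rpow (by positivity) hle hγ0.le
      linarith
    -- counting, fiber by fiber
    set N : ℕ := Finset.univ.sup M with hN
    calc ∑ i : Fin n, |K θ (f n j - f n i)|
        ≤ ∑ i : Fin n, (max C₀ 0) / (1 + (c / 2 * (M i : ℝ)) ^ γ₀) :=
          Finset.sum_le_sum fun i _ => hpoint i
      _ = ∑ m ∈ Finset.range (N + 1), ∑ i ∈ Finset.univ.filter (fun i => M i = m),
            (max C₀ 0) / (1 + (c / 2 * (M i : ℝ)) ^ γ₀) := by
          rw [Finset.sum_fiberwise_of_maps_to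
            (fun i _ => Finset.mem_range.mpr (Nat.lt_succ_of_le (Finset.le_sup (Finset.mem_univ i))))]
      _ ≤ ∑ m ∈ Finset.range (N + 1), (2 * (d + 1) : ℝ) * (2 * m + 1) ^ d *
            ((max C₀ 0) / (1 + (c / 2 * m) ^ γ₀)) := by
          refine Finset.sum_le_sum fun m _ => ?_
          have heq2 : ∑ i ∈ Finset.univ.filter (fun i => M i = m),
              (max C₀ 0) / (1 + (c / 2 * (M i : ℝ)) ^ γ₀)
              = ((Finset.univ.filter (fun i => M i = m)).card : ℝ) *
                ((max C₀ 0) / (1 + (c / 2 * (m : ℝ)) ^ γ₀)) := by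
            rw [Finset.sum_congr rfl (fun i hi => by rw [(Finset.mem_filter.mp hi).2]),
              Finset.sum_const, nsmul_eq_mul]
          rw [heq2]
          have hcard := card_le_shell ψ hinj m
          have hgnn : (0:ℝ) ≤ (max C₀ 0) / (1 + (c / 2 * (m : ℝ)) ^ γ₀) := by positivity
          calc ((Finset.univ.filter (fun i => M i = m)).card : ℝ) *
                ((max C₀ 0) / (1 + (c / 2 * (m : ℝ)) ^ γ₀))
              ≤ (2 * ((d : ℝ) + 1) * (2 * m + 1) ^ d) *
                ((max C₀ 0) / (1 + (c / 2 * (m : ℝ)) ^ γ₀)) := by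
                refine mul_le_mul_of_nonneg_right ?_ hgnn
                rw [hMdef]
                exact hcard
            _ = (2 * (d + 1) : ℝ) * (2 * m + 1) ^ d *
                ((max C₀ 0) / (1 + (c / 2 * m) ^ γ₀)) := by push_cast; ring
      _ ≤ ∑' m : ℕ, (2 * (d + 1) : ℝ) * (2 * m + 1) ^ d *
            ((max C₀ 0) / (1 + (c / 2 * m) ^ γ₀)) :=
          Summable.sum_le_tsum _ (fun m _ => by positivity) hsum
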